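/- Let C be a nonempty closed convex subset of a real Hilbert space H and let {x_n} be a sequence in H such that ‖x_{n+1} − z‖ ≤ ‖x_n − z‖ for every z ∈ C and every n = 0, 1, 2, …. Then the sequence {P_C x_n} of metric projections converges strongly to some point u ∈ C. -/

import Mathlib

open scoped RealInnerProductSpace
open Filter Topology

theorem stmt_6
    {H : Type*} [NormedAddCommGroup H] [InnerProductSpace ℝ H] [CompleteSpace H]
    (C : Set H) (hCne : C.Nonempty) (hCcl : IsClosed C) (hCcv : Convex ℝ C)
    (PC : H → H) (hPC : ∀ u : H, PC u ∈ C ∧ ∀ w ∈ C, ‖u - PC u‖ ≤ ‖u - w‖)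
    (x : ℕ → H)
    (hfejer : ∀ z ∈ C, ∀ n : ℕ, ‖x (n + 1) - z‖ ≤ ‖x n - z‖) :
    ∃ u ∈ C, Tendsto (fun n => PC (x n)) atTop (𝓝 u) := by
  classical
  set d : ℕ → ℝ := fun n => ‖x n - PC (x n)‖ with hd
  have hdnonneg : ∀ n, 0 ≤ d n := fun n => norm_nonneg _
  -- monotonicity of distances to points of C
  have hmono : ∀ z ∈ C, ∀ n m : ℕ, n ≤ m → ‖x m - z‖ ≤ ‖x n - z‖ := by
    intro z hz n m hnm
    induction m, hnm using Nat.le_induction with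
    | base => exact le_rfl
    | succ m hm ih => exact le_trans (hfejer z hz m) ih
  have hant : Antitone d := by
    apply antitone_nat_of_succ_le
    intro n
    calc d (n + 1) ≤ ‖x (n + 1) - PC (x n)‖ := (hPC (x (n + 1))).2 _ (hPC (x n)).1
      _ ≤ ‖x n - PC (x n)‖ := hfejer _ (hPC (x n)).1 n
  -- key quadratic estimate
  have key : ∀ n m : ℕ, n ≤ m →
      ‖PC (x n) - PC (x m)‖ ^ 2 ≤ 2 * (d n) ^ 2 - 2 * (d m) ^ 2 := by
    intro n m hnm
    set a := x m
    set p := PC (x m)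
    set q := PC (x n)
    have hc : (1 / 2 : ℝ) • p + (1 / 2 : ℝ) • q ∈ C :=
      hCcv (hPC (x m)).1 (hPC (x n)).1 (by norm_num) (by norm_num) (by norm_num)
    have h1 : ‖a - p‖ ≤ ‖a - ((1 / 2 : ℝ) • p + (1 / 2 : ℝ) • q)‖ := (hPC a).2 _ hc
    have h2 : ‖a - q‖ ≤ d n := by
      have := hmono q (hPC (x n)).1 n m hnm
      simpa using this
    have hpar := parallelogram_law_with_norm ℝ (a - p) (a - q)
    have e1 : (a - p) + (a - q) = (2 : ℝ) • (a - ((1 / 2 : ℝ) • p + (1 / 2 : ℝ) • q)) := by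
      module
    have e2 : (a - p) - (a - q) = q - p := by abel
    rw [e1, e2, norm_smul] at hpar
    simp only [Real.norm_ofNat] at hpar
    have hqp : ‖PC (x n) - PC (x m)‖ = ‖q - p‖ := rfl
    have hdm : d m = ‖a - p‖ := rfl
    have h2' : ‖a - q‖ ^ 2 ≤ (d n) ^ 2 := by
      have := norm_nonneg (a - q); nlinarith
    have h1' : ‖a - p‖ ^ 2 ≤ ‖a - ((1 / 2 : ℝ) • p + (1 / 2 : ℝ) • q)‖ ^ 2 := by
      have := norm_nonneg (a - p); nlinarith
    rw [hqp, hdm]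
    nlinarith [hpar, h1', h2']
  -- limit of d
  have hbdd : BddBelow (Set.range d) := ⟨0, by rintro _ ⟨n, rfl⟩; exact hdnonneg n⟩
  set l : ℝ := ⨅ n, d n with hl
  have hlim : Tendsto d atTop (𝓝 l) := tendsto_atTop_ciInf hant hbdd
  have hlge : ∀ n, l ≤ d n := fun n => ciInf_le hbdd n
  have hl0 : 0 ≤ l := le_ciInf hdnonneg
  set b : ℕ → ℝ := fun N => Real.sqrt (2 * (d N) ^ 2 - 2 * l ^ 2) with hb
  have hb0 : Tendsto b atTop (𝓝 0) := by
    have h1 : Tendsto (fun N => 2 * (d N) ^ 2 - 2 * l ^ 2) atTop (𝓝 0) := by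
      have := ((hlim.pow 2).const_mul 2).sub_const (2 * l ^ 2)
      simpa using this
    have := (Real.continuous_sqrt.tendsto 0).comp h1
    simpa [hb, Real.sqrt_zero, Function.comp_def] using this
  have hcauchy : CauchySeq (fun n => PC (x n)) := by
    apply cauchySeq_of_le_tendsto_0 b _ hb0
    intro n m N hn hm
    have main : ∀ n m : ℕ, N ≤ n → n ≤ m → dist (PC (x n)) (PC (x m)) ≤ b N := by
      intro n m hNn hnm
      have hk := key n m hnm
      have hdn : d n ≤ d N := hant hNn
      have hdm : l ≤ d m := hlge m
      have hsq : dist (PC (x n)) (PC (x m)) ^ 2 ≤ 2 * (d N) ^ 2 - 2 * l ^ 2 := by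
        rw [dist_eq_norm]
        nlinarith [hdnonneg n, hdnonneg N, hdnonneg m, hl0]
      have := Real.sqrt_le_sqrt hsq
      calc dist (PC (x n)) (PC (x m))
          = Real.sqrt (dist (PC (x n)) (PC (x m)) ^ 2) := by
            rw [Real.sqrt_sq dist_nonneg]
        _ ≤ b N := this
    rcases le_total n m with h | h
    · exact main n m hn h
    · rw [dist_comm]; exact main m n hm h
  obtain ⟨u, hu⟩ := cauchySeq_tendsto_of_complete hcauchy
  exact ⟨u, hCcl.mem_of_tendsto hu (Filter.Eventually.of_forall fun n => (hPC (x n)).1), hu⟩
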